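/- For every ε > 0 there exists k_0 = k_0(ε) such that for all integers k ≥ k_0, all real r with 0 < r ≤ 2^{k-1}·ln 2 − (ln 2)/2 − 1/2 − ε, and all α ∈ (0.9, 1]: g_r(α) < g_r(1/2). -/

import Mathlib

open Real

set_option maxHeartbeats 1000000


lemma aux_log_le_div_e {t : ℝ} (ht : 0 < t) : Real.log t ≤ t * (Real.exp 1)⁻¹ := by
  have he : (0:ℝ) < Real.exp 1 := Real.exp_pos 1
  have h1 : Real.log (t / Real.exp 1) ≤ t / Real.exp 1 - 1 :=
    Real.log_le_sub_one_of_pos (by positivity)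
  have h2 : Real.log (t / Real.exp 1) = Real.log t - 1 := by
    rw [Real.log_div (ne_of_gt ht) (ne_of_gt he), Real.log_exp]
  have : t / Real.exp 1 ≤ t * (Real.exp 1)⁻¹ + 0 := by rw [div_eq_mul_inv]; linarith
  linarith

lemma aux_neg_mul_log_le {β : ℝ} (hβ : 0 < β) : -(β * Real.log β) ≤ (Real.exp 1)⁻¹ := by
  have h1 : Real.log β⁻¹ ≤ β⁻¹ * (Real.exp 1)⁻¹ := aux_log_le_div_e (by positivity)
  have h2 : Real.log β⁻¹ = -Real.log β := Real.log_inv β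
  have := mul_le_mul_of_nonneg_left (h2 ▸ h1) hβ.le
  rw [← mul_assoc, mul_inv_cancel₀ (ne_of_gt hβ), one_mul] at this
  linarith

lemma aux_neg_mul_log_le' {α : ℝ} (hα : 0 < α) : -(α * Real.log α) ≤ 1 - α := by
  have h1 : Real.log α⁻¹ ≤ α⁻¹ - 1 := Real.log_le_sub_one_of_pos (by positivity)
  have h2 : Real.log α⁻¹ = -Real.log α := Real.log_inv α
  have := mul_le_mul_of_nonneg_left (h2 ▸ h1) hα.le
  rw [mul_sub, mul_inv_cancel₀ (ne_of_gt hα), mul_one] at this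
  linarith

lemma aux_pow_le {β : ℝ} (hβ0 : 0 ≤ β) (hβ1 : β ≤ 1) (k : ℕ) :
    (1 - β) ^ k ≤ 1 - k * β + k ^ 2 * β ^ 2 / 2 := by
  induction k with
  | zero => norm_num
  | succ n ih =>
    have h1 : (1 - β) ^ (n + 1) = (1 - β) ^ n * (1 - β) := by ring
    have h2 : (1 - β) ^ n * (1 - β) ≤ (1 - (n:ℝ) * β + (n:ℝ) ^ 2 * β ^ 2 / 2) * (1 - β) :=
      mul_le_mul_of_nonneg_right ih (by linarith)
    push_cast
    nlinarith [sq_nonneg β, sq_nonneg ((n:ℝ) * β), mul_nonneg hβ0 hβ0,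
      mul_nonneg (mul_nonneg (Nat.cast_nonneg n) hβ0) hβ0,
      mul_nonneg (mul_nonneg (mul_nonneg (Nat.cast_nonneg n) (Nat.cast_nonneg n)) hβ0) (mul_nonneg hβ0 hβ0)]

lemma aux_neg_log_one_sub_le {x : ℝ} (hx0 : 0 < x) (hx : x ≤ 1/4) :
    -Real.log (1 - x) ≤ x + x^2/2 + 4/3 * x^3 := by
  have h := Real.abs_log_sub_add_sum_range_le (x := x) (by rw [abs_of_pos hx0]; linarith) 2
  rw [abs_of_pos hx0] at h
  have hsum : (∑ i ∈ Finset.range 2, x ^ (i + 1) / (i + 1)) = x + x^2/2 := by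
    simp [Finset.sum_range_succ]; ring
  rw [hsum] at h
  have h2 : x ^ 3 / (1 - x) ≤ 4/3 * x^3 := by
    rw [div_le_iff₀ (by linarith)]
    nlinarith [pow_pos hx0 3]
  have h3 := abs_le.1 h
  linarith [h3.2]

lemma aux_logk {k : ℕ} (hk : 650000 ≤ k) :
    13 ≤ Real.log k ∧ (Real.log k)^2 ≤ (k:ℝ)/50 := by
  have hkR : (650000:ℝ) ≤ (k:ℝ) := by exact_mod_cast hk
  have hk0 : (0:ℝ) < (k:ℝ) := by linarith
  have hl2 : (0.6931471803:ℝ) < Real.log 2 := Real.log_two_gt_d9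
  have h1 : Real.log (2^19 : ℝ) ≤ Real.log k := by
    apply Real.log_le_log (by norm_num)
    norm_num; linarith
  have h2 : Real.log ((2:ℝ)^19) = 19 * Real.log 2 := by
    rw [Real.log_pow]; push_cast; ring
  have hL13 : 13 ≤ Real.log k := by rw [h2] at h1; nlinarith
  refine ⟨hL13, ?_⟩
  have hsq : (0:ℝ) ≤ (k:ℝ) := hk0.le
  have hu0 : (0:ℝ) ≤ Real.sqrt k := Real.sqrt_nonneg _
  have e1 : Real.log k = 2 * Real.log (Real.sqrt k) := by rw [Real.log_sqrt hsq]; ring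
  have e2 : Real.log (Real.sqrt k) = 2 * Real.log (Real.sqrt (Real.sqrt k)) := by
    rw [Real.log_sqrt hu0]; ring
  have hspos : (0:ℝ) < Real.sqrt (Real.sqrt k) := by
    apply Real.sqrt_pos.2; apply Real.sqrt_pos.2; exact hk0
  have e3 : Real.log (Real.sqrt (Real.sqrt k)) ≤ Real.sqrt (Real.sqrt k) :=
    le_trans (Real.log_le_sub_one_of_pos hspos) (by linarith)
  have hL4 : Real.log k ≤ 4 * Real.sqrt (Real.sqrt k) := by rw [e1, e2]; linarith
  have hv2 : (Real.sqrt (Real.sqrt k))^2 = Real.sqrt k := Real.sq_sqrt hu0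
  have hu2 : (Real.sqrt k)^2 = (k:ℝ) := Real.sq_sqrt hsq
  have h800 : (800:ℝ) ≤ Real.sqrt k := by
    have h8 : (800:ℝ) = Real.sqrt 640000 := by
      rw [show (640000:ℝ) = 800^2 by norm_num, Real.sqrt_sq (by norm_num)]
    rw [h8]; exact Real.sqrt_le_sqrt (by linarith)
  have hLsq : (Real.log k)^2 ≤ 16 * Real.sqrt k := by nlinarith [hL4, hv2, hL13]
  nlinarith [hu2, h800, hu0]

lemma aux_key (k : ℕ) (hk : 650000 ≤ k) (μ x α β : ℝ) (hμ : 0 < μ) (hμ1 : μ ≤ 1)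
    (hx0 : 0 < x) (hxlog : Real.log x = (1 - (k:ℝ)) * Real.log 2)
    (hxk : x * (k:ℝ)^4 ≤ μ/4)
    (hα : 0.9 < α) (hα1 : α ≤ 1) (hab : β = 1 - α) :
    -(α * Real.log α + β * Real.log β)
      < (1 - (α^k + β^k)) * Real.log 2 + (α^k + β^k) * x * (1/2 + μ) := by
  have hk2 : 2 ≤ k := by omega
  have hkR : (650000:ℝ) ≤ (k:ℝ) := by exact_mod_cast hk
  have hk0 : (0:ℝ) < (k:ℝ) := by linarith
  have hk1 : (1:ℝ) ≤ (k:ℝ) := by linarith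
  have hl2a : (0.6931:ℝ) < Real.log 2 := by have := Real.log_two_gt_d9; linarith
  have hl2b : Real.log 2 < 0.6932 := by have := Real.log_two_lt_d9; linarith
  have hl2pos : (0:ℝ) < Real.log 2 := by linarith
  have hl27 : Real.log 2 ≤ 0.7 := by linarith
  have hβ0 : 0 ≤ β := by rw [hab]; linarith
  have hβ1 : β < 0.1 := by rw [hab]; linarith
  have hαpos : (0:ℝ) < α := by linarith
  have hαβ : (1:ℝ) - β = α := by rw [hab]; ring
  have hkp2 : (1:ℝ) ≤ (k:ℝ)^2 := by
    calc (1:ℝ) = 1^2 := by norm_num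
    _ ≤ (k:ℝ)^2 := pow_le_pow_left₀ (by norm_num) hk1 2
  have hkp1 : (1:ℝ) ≤ (k:ℝ)^4 := by
    calc (1:ℝ) = 1^4 := by norm_num
    _ ≤ (k:ℝ)^4 := pow_le_pow_left₀ (by norm_num) hk1 4
  have hx14 : x ≤ μ/4 := by
    have w := mul_le_mul_of_nonneg_left hkp1 hx0.le
    rw [mul_one] at w
    linarith [hxk]
  have hxq : x ≤ 1/4 := by linarith
  have hk2x : (k:ℝ)^2 * x ≤ μ/4 := by
    have e := mul_le_mul_of_nonneg_left hkp2 (by positivity : (0:ℝ) ≤ (k:ℝ)^2)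
    rw [mul_one] at e
    have e2 : (k:ℝ)^2*(k:ℝ)^2 = (k:ℝ)^4 := by ring
    have e3 : (k:ℝ)^2 ≤ (k:ℝ)^4 := by linarith
    have e4 := mul_le_mul_of_nonneg_left e3 hx0.le
    linarith [hxk]
  have hEnt : -(α * Real.log α) ≤ β := by
    have := aux_neg_mul_log_le' hαpos; rw [hab]; linarith [this]
  have hsk0 : (0:ℝ) ≤ α^k + β^k := by positivity
  have hβle1 : β ≤ 1 := by linarith
  have hpow_up : (1-β)^k ≤ 1 - k*β + (k:ℝ)^2*β^2/2 := aux_pow_le hβ0 hβle1 k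
  rw [hαβ] at hpow_up
  have hβk2 : β^k ≤ β^2 := pow_le_pow_of_le_one hβ0 hβle1 hk2
  have hβkpos : (0:ℝ) ≤ β^k := pow_nonneg hβ0 k
  have honesub : 1 - (α^k + β^k) ≥ (k:ℝ)*β - (k:ℝ)^2*β^2/2 - β^k := by linarith
  rcases eq_or_lt_of_le hβ0 with hβz | hβpos
  · -- β = 0, α = 1
    have hβeq : β = 0 := hβz.symm
    subst hβeq
    have hαeq : α = 1 := by linarith
    subst hαeq
    simp only [Real.log_one, Real.log_zero, one_pow, zero_pow (by omega : k ≠ 0)]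
    norm_num
    positivity
  -- β > 0
  have hlogβ : -Real.log β = Real.log (x/β) + ((k:ℝ)-1) * Real.log 2 := by
    rw [Real.log_div (ne_of_gt hx0) (ne_of_gt hβpos), hxlog]; ring
  have hHbound : -(α * Real.log α + β * Real.log β)
      ≤ (k:ℝ)*β*Real.log 2 + β * (1 - Real.log 2 + Real.log (x/β)) := by
    have h2 : β * (-Real.log β) = β * Real.log (x/β) + β*((k:ℝ)-1)*Real.log 2 := by
      rw [hlogβ]; ring
    have h3 : -(β * Real.log β) = β * (-Real.log β) := by ring
    linarith [hEnt]
  by_cases hcA : β ≤ x * k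
  · -- Case A1 : 0 < β ≤ x k
    have hxb0 : (0:ℝ) < x/(2*β) := by positivity
    have hlog1 : Real.log (x/(2*β)) ≤ x/(2*β) - 1 := Real.log_le_sub_one_of_pos hxb0
    have hlog2 : Real.log (x/β) = Real.log (x/(2*β)) + Real.log 2 := by
      rw [show x/(2*β) = (x/β)/2 by ring,
        Real.log_div (div_ne_zero (ne_of_gt hx0) (ne_of_gt hβpos)) (by norm_num)]
      ring
    have hmain : β * (1 - Real.log 2 + Real.log (x/β)) ≤ x/2 := by
      have h3 : β * (1 - Real.log 2 + Real.log (x/β)) = β * (1 + Real.log (x/(2*β))) := by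
        rw [hlog2]; ring
      have h4 : β * (1 + Real.log (x/(2*β))) ≤ β * (x/(2*β)) :=
        mul_le_mul_of_nonneg_left (by linarith) hβ0
      have h5 : β * (x/(2*β)) = x/2 := by field_simp
      linarith
    have hkβ : (k:ℝ)*β ≤ μ/4 := by
      have w := mul_le_mul_of_nonneg_left hcA hk0.le
      have e : (k:ℝ)*(x*(k:ℝ)) = (k:ℝ)^2*x := by ring
      linarith [hk2x]
    have hkβ1 : (k:ℝ)*β ≤ 1 := by linarith
    have hb1 : β^2 ≤ (x*(k:ℝ))^2 := pow_le_pow_left₀ hβ0 hcA 2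
    have hb2 : (k:ℝ)^2*β^2 ≤ (k:ℝ)^2*(x*(k:ℝ))^2 :=
      mul_le_mul_of_nonneg_left hb1 (by positivity)
    have hb3 : (k:ℝ)^2*(x*(k:ℝ))^2 = ((k:ℝ)^4*x)*x := by ring
    have hb4 : ((k:ℝ)^4*x)*x ≤ (μ/4)*x := by
      apply mul_le_mul_of_nonneg_right _ hx0.le
      linarith [hxk]
    have ha1 : (k:ℝ)^2*β^2 ≤ (μ/4)*x := by linarith
    have ha2' : (x*(k:ℝ))^2 ≤ (μ/4)*x := by
      have e : (x*(k:ℝ))^2 = ((k:ℝ)^2*x)*x := by ring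
      rw [e]; exact mul_le_mul_of_nonneg_right hk2x hx0.le
    have ha2 : β^k ≤ (μ/4)*x := le_trans hβk2 (le_trans hb1 ha2')
    have hs_lo : (1:ℝ) - (k:ℝ)*β ≤ α^k + β^k := by
      have hb := one_add_mul_le_pow (by linarith : (-2:ℝ) ≤ -β) k
      have hb' : 1 - (k:ℝ)*β ≤ (1-β)^k := by
        calc 1 - (k:ℝ)*β = 1 + (k:ℝ)*(-β) := by ring
        _ ≤ (1 + -β)^k := hb
        _ = (1-β)^k := by ring_nf
      rw [hαβ] at hb'
      linarith
    have hrhs : (1 - (α^k + β^k)) * Real.log 2 + (α^k + β^k) * x * (1/2 + μ)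
        ≥ ((k:ℝ)*β - (k:ℝ)^2*β^2/2 - β^k) * Real.log 2 + (1 - (k:ℝ)*β) * (x * (1/2+μ)) := by
      have e1 : ((k:ℝ)*β - (k:ℝ)^2*β^2/2 - β^k) * Real.log 2 ≤ (1 - (α^k + β^k)) * Real.log 2 :=
        mul_le_mul_of_nonneg_right honesub hl2pos.le
      have e2 : (1 - (k:ℝ)*β) * (x * (1/2+μ)) ≤ (α^k + β^k) * (x * (1/2+μ)) :=
        mul_le_mul_of_nonneg_right hs_lo (by positivity)
      have e3 : (α^k + β^k) * (x * (1/2+μ)) = (α^k + β^k) * x * (1/2+μ) := by ring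
      linarith
    -- final arithmetic for A1
    have c1 : (k:ℝ)^2*β^2 * Real.log 2 ≤ ((μ/4)*x) * 0.7 :=
      mul_le_mul ha1 hl27 hl2pos.le (by positivity)
    have c2 : β^k * Real.log 2 ≤ ((μ/4)*x) * 0.7 :=
      mul_le_mul ha2 hl27 hl2pos.le (by positivity)
    have c3 : ((k:ℝ)*β) * (x * (1/2+μ)) ≤ (μ/4) * (x * (3/2)) := by
      have e1 : x * (1/2+μ) ≤ x * (3/2) :=
        mul_le_mul_of_nonneg_left (by linarith) hx0.le
      apply mul_le_mul hkβ e1 (by positivity) (by linarith)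
    have hexp : x*(1/2+μ) = x/2 + x*μ := by ring
    have d1 : (1 - (k:ℝ)*β) * (x*(1/2+μ)) = x/2 + x*μ - ((k:ℝ)*β)*(x*(1/2+μ)) := by ring
    have d2 : ((k:ℝ)*β - (k:ℝ)^2*β^2/2 - β^k) * Real.log 2
        = (k:ℝ)*β*Real.log 2 - ((k:ℝ)^2*β^2*Real.log 2)/2 - β^k*Real.log 2 := by ring
    have hfin : (k:ℝ)*β*Real.log 2 + x/2
        < ((k:ℝ)*β - (k:ℝ)^2*β^2/2 - β^k) * Real.log 2 + (1 - (k:ℝ)*β) * (x * (1/2+μ)) := by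
      have hμx : (0:ℝ) < x*μ := mul_pos hx0 hμ
      linarith [c1, c2, c3]
    linarith
  · push_neg at hcA
    obtain ⟨hL13, hLsq⟩ := aux_logk hk
    by_cases hcB : β ≤ ((k:ℝ)^2)⁻¹
    · -- Case A2 : x k < β ≤ 1/k²
      have hk2β : (k:ℝ)^2*β ≤ 1 := by
        have h := mul_le_mul_of_nonneg_left hcB (by positivity : (0:ℝ) ≤ (k:ℝ)^2)
        rwa [mul_inv_cancel₀ (by positivity : ((k:ℝ)^2) ≠ 0)] at h
      have hxβ : x/β < 1/(k:ℝ) := by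
        rw [div_lt_div_iff₀ hβpos hk0]
        linarith [hcA]
      have hlogxβ : Real.log (x/β) < -Real.log k := by
        have := Real.log_lt_log (by positivity : (0:ℝ) < x/β) hxβ
        rwa [one_div, Real.log_inv] at this
      have hβk1 : β^k ≤ β := by
        calc β^k ≤ β^1 := pow_le_pow_of_le_one hβ0 hβle1 (by omega)
        _ = β := pow_one β
      have hH2 : -(α * Real.log α + β * Real.log β)
          < (k:ℝ)*β*Real.log 2 + β*(1 - Real.log 2) - β*Real.log k := by
        have h1 := mul_lt_mul_of_pos_left hlogxβ hβpos
        have h2 : (k:ℝ)*β*Real.log 2 + β * (1 - Real.log 2 + Real.log (x/β))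
            = (k:ℝ)*β*Real.log 2 + β*(1-Real.log 2) + β*Real.log (x/β) := by ring
        have h4 : β * (-Real.log k) = -(β * Real.log k) := by ring
        linarith [hHbound, h1, h2]
      have t1 : (k:ℝ)^2*β^2 ≤ β := by
        have w := mul_le_mul_of_nonneg_right hk2β hβ0
        have e : (k:ℝ)^2*β*β = (k:ℝ)^2*β^2 := by ring
        linarith
      have t2 : β^k * Real.log 2 ≤ β * 0.7 :=
        mul_le_mul hβk1 hl27 hl2pos.le hβ0
      have t3 : 0.6931*β ≤ β*Real.log 2 := by
        have := mul_le_mul_of_nonneg_left hl2a.le hβ0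
        linarith
      have t4 : 13*β ≤ β*Real.log k := by
        have := mul_le_mul_of_nonneg_left hL13 hβ0
        linarith
      have t5 : (k:ℝ)^2*β^2/2 * Real.log 2 ≤ (β/2) * 0.7 :=
        mul_le_mul (by linarith) hl27 hl2pos.le (by linarith)
      have hneg : (k:ℝ)*β*Real.log 2 + β*(1 - Real.log 2) - β*Real.log k
          ≤ ((k:ℝ)*β - (k:ℝ)^2*β^2/2 - β^k) * Real.log 2 := by
        have d : ((k:ℝ)*β - (k:ℝ)^2*β^2/2 - β^k) * Real.log 2
            = (k:ℝ)*β*Real.log 2 - (k:ℝ)^2*β^2/2*Real.log 2 - β^k*Real.log 2 := by ring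
        linarith [t2, t3, t4, t5]
      have hrhs : (1 - (α^k + β^k)) * Real.log 2 + (α^k + β^k) * x * (1/2 + μ)
          ≥ ((k:ℝ)*β - (k:ℝ)^2*β^2/2 - β^k) * Real.log 2 := by
        have e1 : ((k:ℝ)*β - (k:ℝ)^2*β^2/2 - β^k) * Real.log 2 ≤ (1 - (α^k + β^k)) * Real.log 2 :=
          mul_le_mul_of_nonneg_right honesub hl2pos.le
        have e2 : (0:ℝ) ≤ (α^k + β^k) * x * (1/2 + μ) := by positivity
        linarith
      linarith
    · -- Case B : β > 1/k²
      push_neg at hcB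
      have hexpk : α^k ≤ Real.exp (-((k:ℝ)*β)) := by
        have h1 : 1 - β ≤ Real.exp (-β) := by
          have := Real.add_one_le_exp (-β); linarith
        have h2 : (1-β)^k ≤ (Real.exp (-β))^k := pow_le_pow_left₀ (by linarith) h1 k
        have h3 : (Real.exp (-β))^k = Real.exp ((k:ℝ)*(-β)) := (Real.exp_nat_mul (-β) k).symm
        rw [h3, show (k:ℝ)*(-β) = -((k:ℝ)*β) by ring] at h2
        rw [← hαβ]
        exact h2
      by_cases hcB1 : 10 * Real.log k / k ≤ β
      · -- Case B1
        have hkβL : Real.log k ≤ (k:ℝ)*β := by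
          rw [div_le_iff₀ hk0] at hcB1
          linarith only [hcB1, hL13]
        have he1 : Real.exp (-((k:ℝ)*β)) ≤ ((k:ℝ))⁻¹ := by
          have h1 : Real.exp (-((k:ℝ)*β)) ≤ Real.exp (-Real.log k) :=
            Real.exp_le_exp.2 (by linarith only [hkβL])
          have h2 : Real.exp (-Real.log k) = ((k:ℝ))⁻¹ := by
            rw [Real.exp_neg, Real.exp_log hk0]
          rwa [h2] at h1
        have hs_up2 : α^k + β^k ≤ ((k:ℝ))⁻¹ + β^2 := by
          linarith only [hexpk, he1, hβk2]
        have hHe : -(α * Real.log α + β * Real.log β) ≤ β + (Real.exp 1)⁻¹ := by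
          have h1 : -(β * Real.log β) ≤ (Real.exp 1)⁻¹ := aux_neg_mul_log_le hβpos
          linarith only [hEnt, h1]
        have hinve : (Real.exp 1)⁻¹ ≤ 0.368 := by
          have h1 : (2.718:ℝ) < Real.exp 1 := by have := Real.exp_one_gt_d9; linarith
          rw [inv_le_comm₀ (Real.exp_pos 1) (by norm_num)]
          linarith only [h1]
        have hkinv : ((k:ℝ))⁻¹ ≤ 0.001 := by
          rw [inv_le_comm₀ hk0 (by norm_num)]
          linarith only [hkR]
        have hβsq : β^2 ≤ 0.01 := by
          have w : β*β ≤ 0.1*0.1 := mul_le_mul hβ1.le hβ1.le hβ0 (by norm_num)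
          have e : β^2 = β*β := by ring
          linarith
        have e1 : (0.989:ℝ) ≤ 1 - (α^k + β^k) := by
          linarith only [hs_up2, hkinv, hβsq]
        have e1' : 0.989 * Real.log 2 ≤ (1 - (α^k + β^k)) * Real.log 2 :=
          mul_le_mul_of_nonneg_right e1 hl2pos.le
        have e2 : (0:ℝ) ≤ (α^k + β^k) * x * (1/2 + μ) := by positivity
        linarith only [hHe, hinve, e1', e2, hl2a, hβ1]
      · -- Case B2
        push_neg at hcB1
        have hkβ10 : (k:ℝ)*β < 10*Real.log k := by
          rw [lt_div_iff₀ hk0] at hcB1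
          linarith only [hcB1]
        have hkβpos : (0:ℝ) < (k:ℝ)*β := by positivity
        have h2L : -Real.log β < 2*Real.log k := by
          have h2 := Real.log_lt_log (by positivity) hcB
          rw [Real.log_inv, Real.log_pow] at h2
          push_cast at h2
          linarith only [h2]
        have hHB : -(α * Real.log α + β * Real.log β) < β + 2*Real.log k*β := by
          have h2 : β * (-Real.log β) < β * (2*Real.log k) :=
            mul_lt_mul_of_pos_left h2L hβpos
          have h3 : -(β * Real.log β) = β * (-Real.log β) := by ring
          linarith only [hEnt, h2, h3]
        have he2 : Real.exp (-((k:ℝ)*β)) ≤ (1 + (k:ℝ)*β)⁻¹ := by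
          have h1 : 1 + (k:ℝ)*β ≤ Real.exp ((k:ℝ)*β) := by
            have := Real.add_one_le_exp ((k:ℝ)*β); linarith only [this]
          rw [Real.exp_neg]
          exact inv_anti₀ (by linarith) h1
        have hd2 : (0:ℝ) < 11*Real.log k := by linarith
        have hfrac : (1 + (k:ℝ)*β)⁻¹ ≤ 1 - (k:ℝ)*β/(11*Real.log k) := by
          have hd1 : (0:ℝ) < 1 + (k:ℝ)*β := by linarith
          have h1 : 1 + (k:ℝ)*β ≤ 11*Real.log k := by
            linarith only [hkβ10, hL13]
          have h2 : (k:ℝ)*β/(11*Real.log k) ≤ (k:ℝ)*β/(1+(k:ℝ)*β) :=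
            div_le_div_of_nonneg_left hkβpos.le hd1 h1
          have h3 : (1 + (k:ℝ)*β)⁻¹ = 1 - (k:ℝ)*β/(1+(k:ℝ)*β) := by
            field_simp
            ring
          rw [h3]
          linarith only [h2]
        have hs_up3 : α^k + β^k ≤ 1 - (k:ℝ)*β/(11*Real.log k) + β^2 := by
          linarith only [hexpk, he2, hfrac, hβk2]
        have hnum : (1 + 2*Real.log k + 0.07) * (11*Real.log k) < Real.log 2 * k := by
          have h0 : (0:ℝ) ≤ Real.log k := by linarith
          have h1 : 13*Real.log k ≤ Real.log k*Real.log k :=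
            mul_le_mul_of_nonneg_right hL13 h0
          have hsq : Real.log k*Real.log k = (Real.log k)^2 := by ring
          have h2 : Real.log k ≤ (k:ℝ)/650 := by
            linarith only [h1, hsq, hLsq]
          have h3 : 0.6931*(k:ℝ) ≤ Real.log 2*(k:ℝ) :=
            mul_le_mul_of_nonneg_right hl2a.le hk0.le
          linarith only [hLsq, h2, h3, hk0]
        have hmain2 : (1 + 2*Real.log k + 0.07) * β < Real.log 2 * ((k:ℝ)*β/(11*Real.log k)) := by
          rw [mul_div_assoc', lt_div_iff₀ hd2]
          have w := mul_lt_mul_of_pos_right hnum hβpos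
          linarith only [w]
        have e1 : (k:ℝ)*β/(11*Real.log k) - β^2 ≤ 1 - (α^k + β^k) := by
          linarith only [hs_up3]
        have e1' : ((k:ℝ)*β/(11*Real.log k) - β^2) * Real.log 2 ≤ (1 - (α^k + β^k)) * Real.log 2 :=
          mul_le_mul_of_nonneg_right e1 hl2pos.le
        have e2 : (0:ℝ) ≤ (α^k + β^k) * x * (1/2 + μ) := by positivity
        have hβ2l2 : β^2 * Real.log 2 ≤ 0.07 * β := by
          have u1 : β*β ≤ 0.1*β := mul_le_mul_of_nonneg_right hβ1.le hβ0
          have u2 : β^2 ≤ 0.1*β := by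
            have e : β^2 = β*β := by ring
            linarith only [u1, e]
          have u3 : β^2*Real.log 2 ≤ (0.1*β)*0.7 :=
            mul_le_mul u2 hl27 hl2pos.le (by linarith only [hβ0])
          linarith only [u3]
        have hexp2 : ((k:ℝ)*β/(11*Real.log k) - β^2) * Real.log 2
            = Real.log 2 * ((k:ℝ)*β/(11*Real.log k)) - β^2 * Real.log 2 := by ring
        linarith only [hHB, hmain2, hβ2l2, e1', e2, hexp2]


/-- The pair-correlation function `f(α) = 1 - 2^(1-k) (2 - α^k - (1-α)^k)`. -/
noncomputable def fPair (k : ℕ) (α : ℝ) : ℝ :=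
  1 - (2 : ℝ) ^ (1 - (k : ℤ)) * (2 - α ^ k - (1 - α) ^ k)

/-- The entropy-correlation function
`g_r(α) = f(α)^r / (α^α (1-α)^(1-α))` (with `0^0 = 1`, as for `Real.rpow`). -/
noncomputable def gNAE (k : ℕ) (r : ℝ) (α : ℝ) : ℝ :=
  fPair k α ^ r / (α ^ α * (1 - α) ^ (1 - α))

/-- **Lemma 6 (Achlioptas–Moore).** For every `ε > 0` there is `k₀` such that
for all `k ≥ k₀`, all `0 < r ≤ 2^(k-1) ln 2 - (ln 2)/2 - 1/2 - ε`, and all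
`α ∈ (0.9, 1]`: `g_r(α) < g_r(1/2)`. -/
theorem gNAE_far_from_half :
    ∀ ε : ℝ, 0 < ε → ∃ k₀ : ℕ, ∀ k : ℕ, k₀ ≤ k → ∀ r : ℝ, 0 < r →
      r ≤ 2 ^ (k - 1) * Real.log 2 - Real.log 2 / 2 - 1 / 2 - ε →
      ∀ α ∈ Set.Ioc (0.9 : ℝ) 1, gNAE k r α < gNAE k r (1 / 2) := by
  intro ε hε
  set μ := min (ε/2) 1 with hμdef
  have hμ0 : 0 < μ := lt_min (by linarith) one_pos
  have hμ1 : μ ≤ 1 := min_le_right _ _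
  have hμε : μ ≤ ε/2 := min_le_left _ _
  clear_value μ
  have htend := tendsto_pow_const_div_const_pow_of_one_lt 4 (by norm_num : (1:ℝ) < 2)
  have hev : ∀ᶠ n : ℕ in Filter.atTop, (n:ℝ)^4 / 2^n < μ/8 :=
    htend.eventually (gt_mem_nhds (by positivity : (0:ℝ) < μ/8))
  obtain ⟨N, hN⟩ := Filter.eventually_atTop.1 hev
  refine ⟨max N 650000, ?_⟩
  intro k hk r hr hrle α hαmem
  obtain ⟨hα, hα1⟩ := hαmem
  have hk65 : 650000 ≤ k := le_trans (le_max_right _ _) hk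
  have hkN : N ≤ k := le_trans (le_max_left _ _) hk
  have hk1 : 1 ≤ k := by omega
  have hk1R : (1:ℝ) ≤ (k:ℝ) := by exact_mod_cast hk1
  have hαpos : (0:ℝ) < α := by linarith
  have hl2a : (0.6931:ℝ) < Real.log 2 := by have := Real.log_two_gt_d9; linarith
  have hl2b : Real.log 2 < 0.6932 := by have := Real.log_two_lt_d9; linarith
  have hl2pos : (0:ℝ) < Real.log 2 := by linarith
  have hl27' : Real.log 2 ≤ 0.7 := by linarith
  -- the quantity x = 2^(1-k)
  set x : ℝ := (2:ℝ)^(1-(k:ℤ)) with hxdef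
  have hx0 : 0 < x := by
    rw [hxdef]; exact zpow_pos (by norm_num) _
  have h2k0 : (0:ℝ) < 2^k := by positivity
  have hxval : x = 2/2^k := by
    rw [hxdef, zpow_sub₀ (by norm_num : (2:ℝ) ≠ 0), zpow_one, zpow_natCast]
  have hxk4 : x*(k:ℝ)^4 ≤ μ/4 := by
    have h := hN k hkN
    rw [hxval]
    rw [div_lt_iff₀ h2k0] at h
    rw [div_mul_eq_mul_div, div_le_iff₀ h2k0]
    linarith only [h]
  have hxlog : Real.log x = (1-(k:ℝ))*Real.log 2 := by
    rw [hxdef, Real.log_zpow]; push_cast; ring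
  clear_value x
  have hkp1 : (1:ℝ) ≤ (k:ℝ)^4 := by
    calc (1:ℝ) = 1^4 := by norm_num
    _ ≤ (k:ℝ)^4 := pow_le_pow_left₀ (by norm_num) hk1R 4
  have hx14 : x ≤ μ/4 := by
    have w := mul_le_mul_of_nonneg_left hkp1 hx0.le
    rw [mul_one] at w
    linarith only [w, hxk4]
  have hxq : x ≤ 1/4 := by linarith
  have hxε : x ≤ ε/8 := by linarith
  -- s facts
  have h1α0 : (0:ℝ) ≤ 1 - α := by linarith
  have hs0 : (0:ℝ) ≤ α^k + (1-α)^k := by positivity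
  have hs1 : α^k + (1-α)^k ≤ 1 := by
    have e1 : α^k ≤ α := pow_le_of_le_one hαpos.le hα1 (by omega)
    have e2 : (1-α)^k ≤ 1-α := pow_le_of_le_one h1α0 (by linarith) (by omega)
    linarith
  -- fPair facts
  have hfα : fPair k α = 1 - x*(2 - α^k - (1-α)^k) := by
    rw [fPair, hxdef]
  have hf_pos : 0 < fPair k α := by
    rw [hfα]
    have e1 : x*(2 - α^k - (1-α)^k) ≤ x*2 :=
      mul_le_mul_of_nonneg_left (by linarith only [hs0, hs1]) hx0.le
    linarith only [e1, hxq, hx0]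
  have h1x0 : (0:ℝ) < 1 - x := by linarith
  have h1x1 : 1 - x < 1 := by linarith
  -- Bernoulli
  have hp1 : (1:ℝ) ≤ 2 - (α^k + (1-α)^k) := by linarith
  have hBer : fPair k α ≤ (1-x)^((2:ℝ) - (α^k+(1-α)^k)) := by
    have hb := one_add_mul_self_le_rpow_one_add (by linarith : (-1:ℝ) ≤ -x) hp1
    have e1 : 1 + (2 - (α^k+(1-α)^k))*(-x) = 1 - x*(2 - α^k - (1-α)^k) := by ring
    have e2 : (1:ℝ) + -x = 1 - x := by ring
    rw [e1, e2] at hb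
    rw [hfα]
    exact hb
  have hlogf : Real.log (fPair k α) ≤ (2 - (α^k+(1-α)^k)) * Real.log (1-x) := by
    calc Real.log (fPair k α) ≤ Real.log ((1-x)^((2:ℝ) - (α^k+(1-α)^k))) :=
          Real.log_le_log hf_pos hBer
    _ = (2 - (α^k+(1-α)^k)) * Real.log (1-x) := Real.log_rpow h1x0 _
  -- A = -log(1-x)
  set A : ℝ := -Real.log (1-x) with hAdef
  have hA0 : 0 < A := by
    rw [hAdef]
    have := Real.log_neg h1x0 h1x1
    linarith
  have hAB : A ≤ x + x^2/2 + 4/3*x^3 := aux_neg_log_one_sub_le hx0 hxq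
  clear_value A
  -- r·A bound
  set T : ℝ := (2:ℝ)^(k-1) with hTdef
  have hTx : T * x = 1 := by
    rw [hTdef, hxdef, ← zpow_natCast (2:ℝ) (k-1), ← zpow_add₀ (by norm_num : (2:ℝ) ≠ 0)]
    have e : ((k-1 : ℕ) : ℤ) + (1 - (k:ℤ)) = 0 := by
      have : ((k-1:ℕ):ℤ) = (k:ℤ) - 1 := by
        push_cast [Nat.cast_sub hk1]; ring
      omega
    rw [e, zpow_zero]
  clear_value T
  set R : ℝ := T * Real.log 2 - Real.log 2/2 - 1/2 - ε with hRdef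
  have hrleR : r ≤ R := hrle
  have hR0 : 0 ≤ R := le_trans hr.le hrleR
  clear_value R
  have hrA : r*A ≤ R*(x + x^2/2 + 4/3*x^3) := by
    have h1 : r*A ≤ R*A := mul_le_mul_of_nonneg_right hrleR hA0.le
    have h2 : R*A ≤ R*(x + x^2/2 + 4/3*x^3) := mul_le_mul_of_nonneg_left hAB hR0
    exact le_trans h1 h2
  have hRB : R*(x + x^2/2 + 4/3*x^3) ≤ Real.log 2 - x*(1/2+μ) := by
    have e : R*(x + x^2/2 + 4/3*x^3)
        = (T*x)*Real.log 2 + Real.log 2*(T*x)*(x/2) + Real.log 2*(T*x)*(4/3*x^2)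
          - (Real.log 2/2 + 1/2 + ε)*(x + x^2/2 + 4/3*x^3) := by
      rw [hRdef]; ring
    rw [hTx] at e
    have j0 : (0:ℝ) ≤ (Real.log 2/2 + 1/2 + ε)*(x^2/2 + 4/3*x^3) := by positivity
    have w1 : x*x ≤ (ε/8)*x := mul_le_mul_of_nonneg_right hxε hx0.le
    have w2 : x^2 = x*x := by ring
    have w3 : Real.log 2*(4/3*x^2) ≤ 0.7*(4/3*x^2) :=
      mul_le_mul_of_nonneg_right hl27' (by positivity)
    have j1 : Real.log 2*(4/3*x^2) ≤ x*(ε/2) := by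
      linarith only [w1, w2, w3, hε, sq_nonneg x]
    have j2 : μ*x ≤ (ε/2)*x := mul_le_mul_of_nonneg_right hμε hx0.le
    linarith only [e, j0, j1, j2]
  have hrA2 : r*A ≤ Real.log 2 - x*(1/2+μ) := le_trans hrA hRB
  -- combine
  set s : ℝ := α^k + (1-α)^k with hsdef
  clear_value s
  have hcomb : r*Real.log (fPair k α)
      ≤ 2*r*Real.log (1-x) + s*(r*A) := by
    have h1 : r*Real.log (fPair k α) ≤ r*((2 - s)*Real.log (1-x)) :=
      mul_le_mul_of_nonneg_left hlogf hr.le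
    have e : r*((2 - s)*Real.log (1-x))
        = 2*r*Real.log (1-x) + s*(r*A) := by
      rw [hAdef]; ring
    linarith only [h1, e]
  have hcomb2 : s*(r*A) ≤ s*(Real.log 2 - x*(1/2+μ)) :=
    mul_le_mul_of_nonneg_left hrA2 hs0
  have hkey := aux_key k hk65 μ x α (1-α) hμ0 hμ1 hx0 hxlog hxk4 hα hα1 rfl
  have hscalar : r*Real.log (fPair k α) - (α*Real.log α + (1-α)*Real.log (1-α))
      < 2*r*Real.log (1-x) + Real.log 2 := by
    have expand : (1 - s)*Real.log 2 + s*x*(1/2+μ)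
        + s*(Real.log 2 - x*(1/2+μ)) = Real.log 2 := by ring
    have hkey' : -(α*Real.log α + (1-α)*Real.log (1-α))
        < (1 - s)*Real.log 2 + s*x*(1/2+μ) := by rw [hsdef]; exact hkey
    linarith only [hkey', hcomb, hcomb2, expand]
  -- convert to gNAE
  have hgα : gNAE k r α
      = Real.exp (r*Real.log (fPair k α) - (α*Real.log α + (1-α)*Real.log (1-α))) := by
    have h1 : fPair k α ^ r = Real.exp (r * Real.log (fPair k α)) := by
      rw [Real.rpow_def_of_pos hf_pos, mul_comm]
    have h2 : α ^ α = Real.exp (α * Real.log α) := by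
      rw [Real.rpow_def_of_pos hαpos, mul_comm]
    have h3 : (1-α) ^ (1-α) = Real.exp ((1-α) * Real.log (1-α)) := by
      rcases eq_or_lt_of_le hα1 with he | hl
      · rw [he]; norm_num
      · rw [Real.rpow_def_of_pos (by linarith), mul_comm]
    rw [gNAE, h1, h2, h3, ← Real.exp_add, ← Real.exp_sub]
  have hf12 : fPair k (1/2 : ℝ) = (1-x)^2 := by
    rw [fPair, ← hxdef]
    have e1 : ((1:ℝ)/2)^k = 1/2^k := by rw [div_pow, one_pow]
    have e2 : (1 - (1:ℝ)/2) = 1/2 := by norm_num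
    rw [e2, e1, hxval]
    field_simp
    ring
  have hg2 : gNAE k r (1/2 : ℝ) = Real.exp (2*r*Real.log (1-x) + Real.log 2) := by
    have h1 : fPair k (1/2:ℝ) ^ r = Real.exp (2*r*Real.log (1-x)) := by
      rw [hf12, Real.rpow_def_of_pos (pow_pos h1x0 2), Real.log_pow]
      congr 1
      push_cast
      ring
    have h2 : ((1:ℝ)/2) ^ ((1:ℝ)/2) * (1 - (1:ℝ)/2) ^ (1 - (1:ℝ)/2) = 1/2 := by
      rw [show (1 - (1:ℝ)/2) = 1/2 by norm_num, ← Real.rpow_add (by norm_num : (0:ℝ) < 1/2)]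
      norm_num
    rw [gNAE, h1, h2, Real.exp_add, Real.exp_log (by norm_num : (0:ℝ) < 2)]
    ring
  rw [hgα, hg2]
  exact Real.exp_lt_exp.2 (by linarith [hscalar])
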